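/- arXiv:2510.20737 — 10 statements merged into one kernel-verified Lean document; each statement's English description precedes it below -/
import Mathlib

section
/- Every bipartite graph whose biadjacency matrix (under some ordering of rows and columns) avoids the pattern [[0,1],[1,1]], and which contains no complete bipartite subgraph K_{k,k}, is (k-1)-degenerate. -/
/-- The bipartite graph (on vertex set `α ⊕ β`) determined by an adjacency
relation `A : α → β → Prop` across the two parts. -/
def bipGraph {α β : Type*} (A : α → β → Prop) : SimpleGraph (α ⊕ β) where
  Adj x y := match x, y with
    | Sum.inl i, Sum.inr j => A i j
    | Sum.inr j, Sum.inl i => A i j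
    | _, _ => False
  symm := ⟨by rintro (i | i) (j | j) h <;> exact h⟩
  loopless := ⟨by rintro (i | i) h <;> exact h⟩

/-- Every bipartite graph whose biadjacency matrix (under the given ordering of rows and
columns) avoids the pattern `[[0,1],[1,1]]` and which contains no `K_{k,k}` is
`(k-1)`-degenerate: every nonempty induced subgraph has a vertex of degree at most `k-1`. -/
theorem stmt_2 {m n k : ℕ} (M : Fin m → Fin n → Bool)
    (hpat : ∀ i₁ i₂ : Fin m, ∀ j₁ j₂ : Fin n, i₁ < i₂ → j₁ < j₂ →
      ¬(M i₁ j₁ = false ∧ M i₁ j₂ = true ∧ M i₂ j₁ = true ∧ M i₂ j₂ = true))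
    (hK : ¬ ∃ (R : Finset (Fin m)) (C : Finset (Fin n)), R.card = k ∧ C.card = k ∧
      ∀ i ∈ R, ∀ j ∈ C, M i j = true) :
    ∀ s : Finset (Fin m ⊕ Fin n), s.Nonempty →
      ∃ v ∈ s, {w | w ∈ s ∧ (bipGraph (fun i j => M i j = true)).Adj v w}.ncard ≤ k - 1 := by
  classical
  intro s hs
  by_contra hcon
  push_neg at hcon
  set G := bipGraph (fun i j => M i j = true) with hG
  rcases Nat.eq_zero_or_pos k with rfl | hk
  · exact hK ⟨∅, ∅, rfl, rfl, by simp⟩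
  have hset : ∀ v : Fin m ⊕ Fin n, {w | w ∈ s ∧ G.Adj v w}
      = ↑(s.filter (fun w => G.Adj v w)) := by
    intro v; ext w; simp
  have hdeg : ∀ v ∈ s, k ≤ (s.filter (fun w => G.Adj v w)).card := by
    intro v hv
    have h := hcon v hv
    rw [hset v, Set.ncard_coe_finset] at h
    omega
  set RS : Finset (Fin m) := Finset.univ.filter (fun i => Sum.inl i ∈ s) with hRS
  set CS : Finset (Fin n) := Finset.univ.filter (fun j => Sum.inr j ∈ s) with hCS
  have hrowfilt : ∀ i : Fin m, s.filter (fun w => G.Adj (Sum.inl i) w)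
      = (CS.filter (fun j => M i j = true)).image Sum.inr := by
    intro i; ext w
    cases w with
    | inl i' => simp [hG, bipGraph]
    | inr j => simp [hG, bipGraph, hCS, and_comm]
  have hcolfilt : ∀ j : Fin n, s.filter (fun w => G.Adj (Sum.inr j) w)
      = (RS.filter (fun i => M i j = true)).image Sum.inl := by
    intro j; ext w
    cases w with
    | inl i => simp [hG, bipGraph, hRS, and_comm]
    | inr j' => simp [hG, bipGraph]
  have hrowdeg : ∀ i, Sum.inl i ∈ s → k ≤ (CS.filter (fun j => M i j = true)).card := by
    intro i hi
    have h := hdeg _ hi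
    rwa [hrowfilt, Finset.card_image_of_injective _ Sum.inr_injective] at h
  have hcoldeg : ∀ j, Sum.inr j ∈ s → k ≤ (RS.filter (fun i => M i j = true)).card := by
    intro j hj
    have h := hdeg _ hj
    rwa [hcolfilt, Finset.card_image_of_injective _ Sum.inl_injective] at h
  have hCSne : CS.Nonempty := by
    obtain ⟨v, hv⟩ := hs
    cases v with
    | inl i =>
      have h1 := hrowdeg i hv
      have h2 : (CS.filter (fun j => M i j = true)).Nonempty :=
        Finset.card_pos.mp (by omega)
      obtain ⟨j, hj⟩ := h2
      exact ⟨j, (Finset.mem_filter.mp hj).1⟩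
    | inr j => exact ⟨j, by simp [hCS, hv]⟩
  set jstar := CS.max' hCSne with hjstar
  have hjs : Sum.inr jstar ∈ s :=
    (Finset.mem_filter.mp (CS.max'_mem hCSne)).2
  set R : Finset (Fin m) := RS.filter (fun i => M i jstar = true) with hR
  have hRcard : k ≤ R.card := hcoldeg jstar hjs
  have hRne : R.Nonempty := Finset.card_pos.mp (by omega)
  set imax := R.max' hRne with himax
  have himaxR := R.max'_mem hRne
  have himaxs : Sum.inl imax ∈ s :=
    (Finset.mem_filter.mp (Finset.mem_filter.mp himaxR).1).2
  have himaxj : M imax jstar = true := (Finset.mem_filter.mp himaxR).2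
  set C : Finset (Fin n) := CS.filter (fun j => M imax j = true) with hC
  have hCcard : k ≤ C.card := hrowdeg imax himaxs
  have hall : ∀ i ∈ R, ∀ j ∈ C, M i j = true := by
    intro i hi j hj
    have hij : M i jstar = true := (Finset.mem_filter.mp hi).2
    have hmj : M imax j = true := (Finset.mem_filter.mp hj).2
    rcases eq_or_lt_of_le (Finset.le_max' CS j (Finset.mem_filter.mp hj).1) with hje | hjlt
    · rw [hje]; exact hij
    · rcases eq_or_lt_of_le (Finset.le_max' R i hi) with hie | hilt
      · rw [hie]; exact hmj
      · by_contra hfalse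
        rw [Bool.not_eq_true] at hfalse
        exact hpat i imax j jstar hilt hjlt ⟨hfalse, hij, hmj, himaxj⟩
  obtain ⟨R', hR'sub, hR'card⟩ := Finset.exists_subset_card_eq hRcard
  obtain ⟨C', hC'sub, hC'card⟩ := Finset.exists_subset_card_eq hCcard
  exact hK ⟨R', C', hR'card, hC'card, fun i hi j hj => hall i (hR'sub hi) j (hC'sub hj)⟩
end

section
/- If a bipartite graph G = (U ∪ V, E) with |U| = m and |V| = n has a biadjacency matrix avoiding the pattern [[0,1],[1,1]] and contains no K_{k,k}, then |E| ≤ (m+n)(k-1). -/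
/-- If a bipartite graph with parts of sizes `m` and `n` has a biadjacency matrix
avoiding the pattern `[[0,1],[1,1]]` and contains no `K_{k,k}`, then it has at most
`(m+n)(k-1)` edges. -/
theorem stmt_3 {m n k : ℕ} (M : Fin m → Fin n → Bool)
    (hpat : ∀ i₁ i₂ : Fin m, ∀ j₁ j₂ : Fin n, i₁ < i₂ → j₁ < j₂ →
      ¬(M i₁ j₁ = false ∧ M i₁ j₂ = true ∧ M i₂ j₁ = true ∧ M i₂ j₂ = true))
    (hK : ¬ ∃ (R : Finset (Fin m)) (C : Finset (Fin n)), R.card = k ∧ C.card = k ∧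
      ∀ i ∈ R, ∀ j ∈ C, M i j = true) :
    (Finset.univ.filter (fun p : Fin m × Fin n => M p.1 p.2 = true)).card
      ≤ (m + n) * (k - 1) := by
  -- dispose of k = 0
  rcases k with _ | k'
  · exact absurd ⟨∅, ∅, rfl, rfl, by simp⟩ hK
  set k := k' + 1 with hk
  have hk1 : k - 1 = k' := rfl
  -- number of ones above (i,j) in column j
  set ab : Fin m × Fin n → ℕ :=
    fun p => (Finset.univ.filter (fun i' => i' < p.1 ∧ M i' p.2 = true)).card with hab
  set E := Finset.univ.filter (fun p : Fin m × Fin n => M p.1 p.2 = true) with hE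
  -- strict monotonicity of ab along a column
  have habmono : ∀ p q : Fin m × Fin n, p ∈ E → p.2 = q.2 → p.1 < q.1 → ab p < ab q := by
    intro p q hp hpq hlt
    apply Finset.card_lt_card
    constructor
    · intro i' hi'
      simp only [Finset.mem_filter, Finset.mem_univ, true_and] at hi' ⊢
      exact ⟨hi'.1.trans hlt, hpq ▸ hi'.2⟩
    · intro hsub
      have := hsub (by
        simp only [Finset.mem_filter, Finset.mem_univ, true_and]
        exact ⟨hlt, (hpq ▸ (Finset.mem_filter.mp hp).2 : M p.1 q.2 = true)⟩)
      simp only [Finset.mem_filter, Finset.mem_univ, true_and] at this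
      exact lt_irrefl _ this.1
  -- key: each row has at most k-1 heavy entries
  have hrow : ∀ i : Fin m,
      (Finset.univ.filter (fun j => M i j = true ∧ k' ≤ ab (i, j))).card ≤ k' := by
    intro i
    by_contra hcon
    push_neg at hcon
    set S := Finset.univ.filter (fun j => M i j = true ∧ k' ≤ ab (i, j)) with hS
    obtain ⟨C, hCS, hCcard⟩ := Finset.exists_subset_card_eq hcon
    have hCne : C.Nonempty := Finset.card_pos.mp (by omega)
    set jx := C.max' hCne with hjx
    have hjxS : jx ∈ S := hCS (C.max'_mem hCne)
    simp only [hS, Finset.mem_filter, Finset.mem_univ, true_and] at hjxS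
    obtain ⟨R₀, hR₀sub, hR₀card⟩ := Finset.exists_subset_card_eq hjxS.2
    have hiR₀ : i ∉ R₀ := by
      intro h
      have := Finset.mem_filter.mp (hR₀sub h)
      exact lt_irrefl _ this.2.1
    refine hK ⟨insert i R₀, C, ?_, hCcard, ?_⟩
    · rw [Finset.card_insert_of_notMem hiR₀, hR₀card]
    · intro r hr j hj
      have hjS := hCS hj
      simp only [hS, Finset.mem_filter, Finset.mem_univ, true_and] at hjS
      rcases Finset.mem_insert.mp hr with rfl | hr
      · exact hjS.1
      · have hrprop := Finset.mem_filter.mp (hR₀sub hr)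
        have hri : r < i := hrprop.2.1
        have hrjx : M r jx = true := hrprop.2.2
        rcases eq_or_lt_of_le (C.le_max' j hj) with heq | hlt
        · exact heq ▸ hrjx
        · by_contra hfalse
          exact hpat r i j jx hri hlt
            ⟨Bool.eq_false_iff.mpr hfalse, hrjx, hjS.1, hjxS.1⟩
  -- split E into light and heavy
  have hsplit := Finset.card_filter_add_card_filter_not
    (s := E) (p := fun p => ab p < k')
  -- light bound
  have hlight : (E.filter (fun p => ab p < k')).card ≤ n * k' := by
    have : (E.filter (fun p => ab p < k')).card ≤
        ((Finset.univ : Finset (Fin n)) ×ˢ Finset.range k').card := by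
      apply Finset.card_le_card_of_injOn (fun p => (p.2, ab p))
      · intro p hp
        simp only [Finset.mem_coe, Finset.mem_filter] at hp
        simp [Finset.mem_product, hp.2]
      · intro p hp q hq hpq
        simp only [Finset.mem_coe, Finset.mem_filter] at hp hq
        have h2 : p.2 = q.2 := (Prod.mk.injEq _ _ _ _ ▸ hpq).1
        have hab' : ab p = ab q := (Prod.mk.injEq _ _ _ _ ▸ hpq).2
        have h1 : p.1 = q.1 := by
          rcases lt_trichotomy p.1 q.1 with h | h | h
          · exact absurd (habmono p q hp.1 h2 h) (by omega)
          · exact h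
          · exact absurd (habmono q p hq.1 h2.symm h) (by omega)
        exact Prod.ext h1 h2
    simpa [mul_comm] using this
  -- heavy bound
  have hheavy : (E.filter (fun p => ¬ ab p < k')).card ≤ m * k' := by
    rw [Finset.card_eq_sum_card_fiberwise
      (f := Prod.fst) (t := (Finset.univ : Finset (Fin m))) (fun p _ => Finset.mem_univ _)]
    calc ∑ i : Fin m, ((E.filter (fun p => ¬ ab p < k')).filter (fun p => p.1 = i)).card
        ≤ ∑ i : Fin m, k' := by
          apply Finset.sum_le_sum
          intro i _
          calc ((E.filter (fun p => ¬ ab p < k')).filter (fun p => p.1 = i)).card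
              = (((E.filter (fun p => ¬ ab p < k')).filter (fun p => p.1 = i)).image
                  Prod.snd).card := by
                rw [Finset.card_image_of_injOn]
                intro p hp q hq hpq
                simp only [Finset.mem_coe, Finset.mem_filter] at hp hq
                exact Prod.ext (hp.2.trans hq.2.symm) hpq
            _ ≤ (Finset.univ.filter (fun j => M i j = true ∧ k' ≤ ab (i, j))).card := by
                apply Finset.card_le_card
                intro j hj
                simp only [Finset.mem_image, Finset.mem_filter, hE, Finset.mem_univ,
                  true_and] at hj ⊢
                obtain ⟨p, ⟨⟨hM, hab'⟩, hp1⟩, hp2⟩ := hj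
                subst hp1; subst hp2
                refine ⟨hM, ?_⟩
                have hpe : ((p.1, p.2) : Fin m × Fin n) = p := rfl
                rw [hpe]; omega
            _ ≤ k' := hrow i
      _ = m * k' := by simp [mul_comm]
  rw [hk1, add_mul]
  omega
end

section
/- Consider a bipartite intersection graph G of a set S of horizontal segments and a set R of vertical upward rays in the plane (u ~ v iff the segment of u meets the ray of v). If G contains no K_{k,k}, then G is 2(k-1)-degenerate. -/
private lemma key_kk {α β : Type*} {k : ℕ} (P : α → β → Prop)
    (D : Finset α) (N : α → Finset β) (f : α → ℝ)
    (hD : k ≤ D.card) (hN : ∀ u ∈ D, k ≤ (N u).card)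
    (h : ∀ u ∈ D, ∀ u' ∈ D, f u' ≤ f u → ∀ v ∈ N u', P u v) :
    ∃ (U : Finset α) (V : Finset β), U.card = k ∧ V.card = k ∧
      ∀ u ∈ U, ∀ v ∈ V, P u v := by
  rcases Nat.eq_zero_or_pos k with rfl | hk
  · exact ⟨∅, ∅, rfl, rfl, by simp⟩
  · have hDne : D.Nonempty := Finset.card_pos.mp (lt_of_lt_of_le hk hD)
    obtain ⟨u₀, hu₀, hmin⟩ := Finset.exists_min_image D f hDne
    obtain ⟨U, hUD, hU⟩ := Finset.exists_subset_card_eq hD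
    obtain ⟨V, hVN, hV⟩ := Finset.exists_subset_card_eq (hN u₀ hu₀)
    exact ⟨U, V, hU, hV, fun u hu v hv =>
      h u (hUD hu) u₀ hu₀ (hmin u (hUD hu)) v (hVN hv)⟩

/-- The bipartite intersection graph of horizontal segments
`[sa u, sb u] × {sy u}` and vertical upward rays `{rx v} × [ry v, ∞)` in the plane,
if it contains no `K_{k,k}`, is `2(k-1)`-degenerate: every nonempty induced subgraph
has a vertex of degree at most `2(k-1)`. -/
theorem stmt_5 {α β : Type*} {k : ℕ} (sa sb sy : α → ℝ) (rx ry : β → ℝ)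
    (A : α → β → Prop)
    (hA : ∀ u v, A u v ↔
      ((Set.Icc (sa u) (sb u) ×ˢ ({sy u} : Set ℝ)) ∩
        (({rx v} : Set ℝ) ×ˢ Set.Ici (ry v))).Nonempty)
    (hK : ¬ ∃ (U : Finset α) (V : Finset β), U.card = k ∧ V.card = k ∧
      ∀ u ∈ U, ∀ v ∈ V, A u v) :
    ∀ s : Finset (α ⊕ β), s.Nonempty →
      ∃ v ∈ s, {w | w ∈ s ∧ (bipGraph A).Adj v w}.ncard ≤ 2 * (k - 1) := by
  classical
  intro s hs
  by_contra hcon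
  push_neg at hcon
  rcases Nat.eq_zero_or_pos k with rfl | hk
  · exact hK ⟨∅, ∅, rfl, rfl, by simp⟩
  -- concrete description of A
  have hA' : ∀ u v, A u v ↔ sa u ≤ rx v ∧ rx v ≤ sb u ∧ ry v ≤ sy u := by
    intro u v
    rw [hA]
    constructor
    · rintro ⟨⟨p, q⟩, ⟨⟨hp1, hq1⟩, ⟨hp2, hq2⟩⟩⟩
      simp only [Set.mem_Icc] at hp1
      simp only [Set.mem_singleton_iff] at hq1 hp2
      simp only [Set.mem_Ici] at hq2
      subst hq1; subst hp2
      exact ⟨hp1.1, hp1.2, hq2⟩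
    · rintro ⟨h1, h2, h3⟩
      exact ⟨(rx v, sy u), ⟨⟨Set.mem_Icc.mpr ⟨h1, h2⟩, rfl⟩, ⟨rfl, h3⟩⟩⟩
  -- degrees in Finset form
  have hdeg : ∀ w ∈ s, 2 * k - 1 ≤ (s.filter (fun w' => (bipGraph A).Adj w w')).card := by
    intro w hw
    have hc := hcon w hw
    have heq : {w' | w' ∈ s ∧ (bipGraph A).Adj w w'} =
        ↑(s.filter (fun w' => (bipGraph A).Adj w w')) := by
      ext w'; simp [Finset.mem_filter]
    rw [heq, Set.ncard_coe_finset] at hc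
    omega
  -- there is a ray in s
  obtain ⟨w, hw⟩ := hs
  have h1 : 0 < (s.filter (fun w' => (bipGraph A).Adj w w')).card :=
    lt_of_lt_of_le (by omega) (hdeg w hw)
  obtain ⟨w', hw'⟩ := Finset.card_pos.mp h1
  rw [Finset.mem_filter] at hw'
  have hray : ∃ j, Sum.inr j ∈ s := by
    rcases w with u | j
    · rcases w' with u' | j
      · exact (hw'.2 : False).elim
      · exact ⟨j, hw'.1⟩
    · exact ⟨j, hw⟩
  -- the finset of rays and of segments
  set B : Finset β := s.preimage Sum.inr (Sum.inr_injective.injOn) with hB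
  set Sg : Finset α := s.preimage Sum.inl (Sum.inl_injective.injOn) with hSg
  have hmemB : ∀ j, j ∈ B ↔ Sum.inr j ∈ s := fun j => Finset.mem_preimage
  have hmemSg : ∀ u, u ∈ Sg ↔ Sum.inl u ∈ s := fun u => Finset.mem_preimage
  have hBne : B.Nonempty := by
    obtain ⟨j, hj⟩ := hray
    exact ⟨j, (hmemB j).mpr hj⟩
  -- ray with maximal base
  obtain ⟨j₀, hj₀B, hjmax⟩ := Finset.exists_max_image B ry hBne
  set x₀ : ℝ := rx j₀ with hx₀
  -- neighbors of a ray, as segments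
  have hcardSeg : ∀ j, Sum.inr j ∈ s → 2 * k - 1 ≤ (Sg.filter (fun u => A u j)).card := by
    intro j hj
    have himg : s.filter (fun w' => (bipGraph A).Adj (Sum.inr j) w') =
        (Sg.filter (fun u => A u j)).image Sum.inl := by
      ext w'
      rcases w' with u | j'
      · simp only [Finset.mem_filter]; simp [bipGraph, hmemSg, and_comm]
      · simp only [Finset.mem_filter]; simp [bipGraph]
    have := hdeg (Sum.inr j) hj
    rwa [himg, Finset.card_image_of_injective _ Sum.inl_injective] at this
  -- neighbors of a segment, as rays
  have hcardRay : ∀ u, Sum.inl u ∈ s → 2 * k - 1 ≤ (B.filter (fun v => A u v)).card := by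
    intro u hu
    have himg : s.filter (fun w' => (bipGraph A).Adj (Sum.inl u) w') =
        (B.filter (fun v => A u v)).image Sum.inr := by
      ext w'
      rcases w' with u' | j'
      · simp only [Finset.mem_filter]; simp [bipGraph]
      · simp only [Finset.mem_filter]; simp [bipGraph, hmemB, and_comm]
    have := hdeg (Sum.inl u) hu
    rwa [himg, Finset.card_image_of_injective _ Sum.inr_injective] at this
  -- D : segments adjacent to j₀
  set D : Finset α := Sg.filter (fun u => A u j₀) with hD
  have hDcard : 2 * k - 1 ≤ D.card := hcardSeg j₀ ((hmemB j₀).mp hj₀B)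
  have hDprops : ∀ u ∈ D, Sum.inl u ∈ s ∧ sa u ≤ x₀ ∧ x₀ ≤ sb u ∧ ry j₀ ≤ sy u := by
    intro u hu
    rw [hD, Finset.mem_filter, hmemSg] at hu
    obtain ⟨h1, h2, h3⟩ := (hA' u j₀).mp hu.2
    exact ⟨hu.1, h1, h2, h3⟩
  -- ray neighborhoods split at x₀
  set Np : α → Finset β := fun u => (B.filter (fun v => A u v)).filter (fun v => x₀ ≤ rx v)
    with hNp
  set Nm : α → Finset β := fun u => (B.filter (fun v => A u v)).filter (fun v => rx v ≤ x₀)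
    with hNm
  have hsplit : ∀ u ∈ D, 2 * k - 1 ≤ (Np u).card + (Nm u).card := by
    intro u hu
    have hsub : B.filter (fun v => A u v) ⊆ Np u ∪ Nm u := by
      intro v hv
      rcases le_total x₀ (rx v) with h | h
      · exact Finset.mem_union_left _ (Finset.mem_filter.mpr ⟨hv, h⟩)
      · exact Finset.mem_union_right _ (Finset.mem_filter.mpr ⟨hv, h⟩)
    calc 2 * k - 1 ≤ (B.filter (fun v => A u v)).card := hcardRay u (hDprops u hu).1
      _ ≤ (Np u ∪ Nm u).card := Finset.card_le_card hsub
      _ ≤ (Np u).card + (Nm u).card := Finset.card_union_le _ _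
  set Dp : Finset α := D.filter (fun u => k ≤ (Np u).card) with hDp
  set Dm : Finset α := D.filter (fun u => k ≤ (Nm u).card) with hDm
  have hDsub : D ⊆ Dp ∪ Dm := by
    intro u hu
    have := hsplit u hu
    rcases le_or_gt k (Np u).card with h | h
    · exact Finset.mem_union_left _ (Finset.mem_filter.mpr ⟨hu, h⟩)
    · exact Finset.mem_union_right _ (Finset.mem_filter.mpr ⟨hu, by omega⟩)
  have hDcases : k ≤ Dp.card ∨ k ≤ Dm.card := by
    have h1 : D.card ≤ (Dp ∪ Dm).card := Finset.card_le_card hDsub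
    have h2 : (Dp ∪ Dm).card ≤ Dp.card + Dm.card := Finset.card_union_le _ _
    omega
  -- common facts for rays in B
  have hBray : ∀ v ∈ B, ry v ≤ ry j₀ := hjmax
  rcases hDcases with hcase | hcase
  · -- right-leaning case, use minimal right endpoint
    refine hK (key_kk A Dp Np sb hcase ?_ ?_)
    · intro u hu; exact (Finset.mem_filter.mp hu).2
    · intro u hu u' hu' hle v hv
      have huD := (Finset.mem_filter.mp hu).1
      have hu'D := (Finset.mem_filter.mp hu').1
      obtain ⟨-, hsa, hsb, hry⟩ := hDprops u huD
      rw [hNp, Finset.mem_filter, Finset.mem_filter] at hv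
      obtain ⟨⟨hvB, hAv⟩, hvx⟩ := hv
      obtain ⟨-, h2, -⟩ := (hA' u' v).mp hAv
      exact (hA' u v).mpr ⟨le_trans hsa hvx, le_trans h2 hle,
        le_trans (hBray v hvB) hry⟩
  · -- left-leaning case, use maximal left endpoint
    refine hK (key_kk A Dm Nm (fun u => -(sa u)) hcase ?_ ?_)
    · intro u hu; exact (Finset.mem_filter.mp hu).2
    · intro u hu u' hu' hle v hv
      have huD := (Finset.mem_filter.mp hu).1
      have hu'D := (Finset.mem_filter.mp hu').1
      obtain ⟨-, hsa, hsb, hry⟩ := hDprops u huD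
      rw [hNm, Finset.mem_filter, Finset.mem_filter] at hv
      obtain ⟨⟨hvB, hAv⟩, hvx⟩ := hv
      obtain ⟨h1, -, -⟩ := (hA' u' v).mp hAv
      have hle' : sa u ≤ sa u' := by have h := hle; linarith
      exact (hA' u v).mpr ⟨le_trans hle' h1, le_trans hvx hsb,
        le_trans (hBray v hvB) hry⟩
end

section
/- If a bipartite graph G = (U ∪ V, E) with |U| = m, |V| = n is an intersection graph of horizontal segments (for U) and vertical upward rays (for V) in the plane and contains no K_{k,k}, then |E| ≤ 2(m+n)(k-1). -/
open Finset

lemma stmt6_aux {m n k : ℕ} (sa sb sy : Fin m → ℝ) (rx ry : Fin n → ℝ) (hk : 1 ≤ k)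
    (hK : ¬ ∃ (U : Finset (Fin m)) (V : Finset (Fin n)), U.card = k ∧ V.card = k ∧
      ∀ u ∈ U, ∀ v ∈ V, sa u ≤ rx v ∧ rx v ≤ sb u ∧ ry v ≤ sy u) :
    ∀ (N : ℕ) (S : Finset (Fin m)) (T : Finset (Fin n)), S.card + T.card ≤ N →
      ∑ u ∈ S, (T.filter (fun v => sa u ≤ rx v ∧ rx v ≤ sb u ∧ ry v ≤ sy u)).card
        ≤ 2 * (S.card + T.card) * (k - 1) := by
  classical
  set E : Fin m → Fin n → Prop := fun u v => sa u ≤ rx v ∧ rx v ≤ sb u ∧ ry v ≤ sy u with hE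
  intro N
  induction N with
  | zero =>
    intro S T h
    have hS : S = ∅ := Finset.card_eq_zero.mp (by omega)
    subst hS; simp
  | succ N ih =>
    intro S T hST
    by_cases hu : ∃ u ∈ S, (T.filter (fun v => E u v)).card ≤ 2 * (k - 1)
    · obtain ⟨u₀, hu₀S, hd⟩ := hu
      have hsum : (∑ u ∈ S.erase u₀, (T.filter (fun v => E u v)).card)
          + (T.filter (fun v => E u₀ v)).card
          = ∑ u ∈ S, (T.filter (fun v => E u v)).card :=
        Finset.sum_erase_add _ _ hu₀S
      have hc : (S.erase u₀).card + 1 = S.card := Finset.card_erase_add_one hu₀S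
      have h1 := ih (S.erase u₀) T (by omega)
      have h2 : 2 * ((S.erase u₀).card + T.card) * (k - 1) + 2 * (k - 1)
          = 2 * (((S.erase u₀).card + 1) + T.card) * (k - 1) := by ring
      calc ∑ u ∈ S, (T.filter (fun v => E u v)).card
          = (∑ u ∈ S.erase u₀, (T.filter (fun v => E u v)).card)
            + (T.filter (fun v => E u₀ v)).card := hsum.symm
        _ ≤ 2 * ((S.erase u₀).card + T.card) * (k - 1) + 2 * (k - 1) := by
            exact Nat.add_le_add h1 hd
        _ = 2 * (((S.erase u₀).card + 1) + T.card) * (k - 1) := h2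
        _ = 2 * (S.card + T.card) * (k - 1) := by rw [hc]
    · by_cases hv : ∃ v ∈ T, (S.filter (fun u => E u v)).card ≤ 2 * (k - 1)
      · obtain ⟨v₀, hv₀T, hd⟩ := hv
        have hsplit : ∀ u, (T.filter (fun v => E u v)).card
            = ((T.erase v₀).filter (fun v => E u v)).card + (if E u v₀ then 1 else 0) := by
          intro u
          rw [Finset.filter_erase]
          by_cases h : E u v₀
          · have hmem : v₀ ∈ T.filter (fun v => E u v) := Finset.mem_filter.mpr ⟨hv₀T, h⟩
            have := Finset.card_erase_add_one hmem
            rw [if_pos h]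
            omega
          · have hnot : v₀ ∉ T.filter (fun v => E u v) := by
              simp [Finset.mem_filter, h]
            rw [Finset.erase_eq_of_notMem hnot]
            rw [if_neg h]
            omega
        have hsum : ∑ u ∈ S, (T.filter (fun v => E u v)).card
            = (∑ u ∈ S, ((T.erase v₀).filter (fun v => E u v)).card)
              + (S.filter (fun u => E u v₀)).card := by
          rw [Finset.card_filter]
          rw [← Finset.sum_add_distrib]
          exact Finset.sum_congr rfl (fun u _ => hsplit u)
        have hc : (T.erase v₀).card + 1 = T.card := Finset.card_erase_add_one hv₀T
        have h1 := ih S (T.erase v₀) (by omega)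
        have h2 : 2 * (S.card + (T.erase v₀).card) * (k - 1) + 2 * (k - 1)
            = 2 * (S.card + ((T.erase v₀).card + 1)) * (k - 1) := by ring
        calc ∑ u ∈ S, (T.filter (fun v => E u v)).card
            = (∑ u ∈ S, ((T.erase v₀).filter (fun v => E u v)).card)
              + (S.filter (fun u => E u v₀)).card := hsum
          _ ≤ 2 * (S.card + (T.erase v₀).card) * (k - 1) + 2 * (k - 1) :=
              Nat.add_le_add h1 hd
          _ = 2 * (S.card + ((T.erase v₀).card + 1)) * (k - 1) := h2
          _ = 2 * (S.card + T.card) * (k - 1) := by rw [hc]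
      · -- all degrees large: derive K_{k,k}
        push_neg at hu hv
        rcases T.eq_empty_or_nonempty with hTe | hTne
        · subst hTe; simp
        exfalso
        obtain ⟨v₀, hv₀T, hmax⟩ := T.exists_max_image ry hTne
        set S₀ := S.filter (fun u => E u v₀) with hS₀def
        have hS₀card : 2 * (k - 1) < S₀.card := hv v₀ hv₀T
        set SR := S₀.filter (fun u => k ≤ (T.filter (fun v => E u v ∧ rx v₀ ≤ rx v)).card) with hSRdef
        set SL := S₀.filter (fun u => k ≤ (T.filter (fun v => E u v ∧ rx v ≤ rx v₀)).card) with hSLdef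
        have hsub : S₀ ⊆ SR ∪ SL := by
          intro u huS₀
          have huS : u ∈ S := Finset.mem_of_mem_filter u huS₀
          have hdu : 2 * (k - 1) < (T.filter (fun v => E u v)).card := hu u huS
          have hsplit : T.filter (fun v => E u v) ⊆
              (T.filter (fun v => E u v ∧ rx v₀ ≤ rx v)) ∪
              (T.filter (fun v => E u v ∧ rx v ≤ rx v₀)) := by
            intro v hvmem
            obtain ⟨hvT, hEv⟩ := Finset.mem_filter.mp hvmem
            rcases le_total (rx v₀) (rx v) with h | h
            · exact Finset.mem_union_left _ (Finset.mem_filter.mpr ⟨hvT, hEv, h⟩)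
            · exact Finset.mem_union_right _ (Finset.mem_filter.mpr ⟨hvT, hEv, h⟩)
          have hle : (T.filter (fun v => E u v)).card
              ≤ (T.filter (fun v => E u v ∧ rx v₀ ≤ rx v)).card
                + (T.filter (fun v => E u v ∧ rx v ≤ rx v₀)).card :=
            le_trans (Finset.card_le_card hsplit) (Finset.card_union_le _ _)
          have : k ≤ (T.filter (fun v => E u v ∧ rx v₀ ≤ rx v)).card ∨
              k ≤ (T.filter (fun v => E u v ∧ rx v ≤ rx v₀)).card := by omega
          rcases this with h | h
          · exact Finset.mem_union_left _ (Finset.mem_filter.mpr ⟨huS₀, h⟩)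
          · exact Finset.mem_union_right _ (Finset.mem_filter.mpr ⟨huS₀, h⟩)
        have hcard2 : 2 * (k - 1) < SR.card + SL.card :=
          lt_of_lt_of_le hS₀card
            (le_trans (Finset.card_le_card hsub) (Finset.card_union_le _ _))
        have hRL : k ≤ SR.card ∨ k ≤ SL.card := by omega
        rcases hRL with hRk | hLk
        · -- right-rich case
          obtain ⟨ub, hubR, hmin⟩ := SR.exists_min_image sb
            (Finset.card_pos.mp (by omega))
          have hubW : k ≤ (T.filter (fun v => E ub v ∧ rx v₀ ≤ rx v)).card :=
            (Finset.mem_filter.mp hubR).2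
          obtain ⟨W, hWsub, hWcard⟩ := Finset.exists_subset_card_eq hubW
          obtain ⟨U, hUsub, hUcard⟩ := Finset.exists_subset_card_eq hRk
          apply hK
          refine ⟨U, W, hUcard, hWcard, ?_⟩
          intro u huU v hvW
          have huSR : u ∈ SR := hUsub huU
          have huS₀ : u ∈ S₀ := Finset.mem_of_mem_filter u huSR
          have hEuv₀ : E u v₀ := (Finset.mem_filter.mp huS₀).2
          have hvW₀ := hWsub hvW
          obtain ⟨hvT, hEubv, hxv⟩ := Finset.mem_filter.mp hvW₀
          exact ⟨le_trans hEuv₀.1 hxv, le_trans hEubv.2.1 (hmin u huSR),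
            le_trans (hmax v hvT) hEuv₀.2.2⟩
        · -- left-rich case
          obtain ⟨ub, hubL, hmaxa⟩ := SL.exists_max_image sa
            (Finset.card_pos.mp (by omega))
          have hubW : k ≤ (T.filter (fun v => E ub v ∧ rx v ≤ rx v₀)).card :=
            (Finset.mem_filter.mp hubL).2
          obtain ⟨W, hWsub, hWcard⟩ := Finset.exists_subset_card_eq hubW
          obtain ⟨U, hUsub, hUcard⟩ := Finset.exists_subset_card_eq hLk
          apply hK
          refine ⟨U, W, hUcard, hWcard, ?_⟩
          intro u huU v hvW
          have huSL : u ∈ SL := hUsub huU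
          have huS₀ : u ∈ S₀ := Finset.mem_of_mem_filter u huSL
          have hEuv₀ : E u v₀ := (Finset.mem_filter.mp huS₀).2
          have hvW₀ := hWsub hvW
          obtain ⟨hvT, hEubv, hxv⟩ := Finset.mem_filter.mp hvW₀
          exact ⟨le_trans (hmaxa u huSL) hEubv.1, le_trans hxv hEuv₀.2.1,
            le_trans (hmax v hvT) hEuv₀.2.2⟩

/-- If the bipartite intersection graph of `m` horizontal segments and `n` vertical
upward rays in the plane contains no `K_{k,k}`, then it has at most `2(m+n)(k-1)` edges. -/
theorem stmt_6 {m n k : ℕ} (sa sb sy : Fin m → ℝ) (rx ry : Fin n → ℝ)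
    (A : Fin m → Fin n → Prop)
    (hA : ∀ u v, A u v ↔
      ((Set.Icc (sa u) (sb u) ×ˢ ({sy u} : Set ℝ)) ∩
        (({rx v} : Set ℝ) ×ˢ Set.Ici (ry v))).Nonempty)
    (hK : ¬ ∃ (U : Finset (Fin m)) (V : Finset (Fin n)), U.card = k ∧ V.card = k ∧
      ∀ u ∈ U, ∀ v ∈ V, A u v) :
    {q : Fin m × Fin n | A q.1 q.2}.ncard ≤ 2 * (m + n) * (k - 1) := by
  classical
  have hAE : ∀ u v, A u v ↔ (sa u ≤ rx v ∧ rx v ≤ sb u ∧ ry v ≤ sy u) := by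
    intro u v
    rw [hA]
    constructor
    · rintro ⟨⟨px, py⟩, ⟨⟨hx, hy⟩, hx', hy'⟩⟩
      simp only [Set.mem_Icc, Set.mem_singleton_iff, Set.mem_Ici] at hx hy hx' hy'
      subst hx' hy
      exact ⟨hx.1, hx.2, hy'⟩
    · rintro ⟨h1, h2, h3⟩
      exact ⟨(rx v, sy u), ⟨⟨by simp [Set.mem_Icc, h1, h2], by simp⟩,
        ⟨by simp, by simp [Set.mem_Ici, h3]⟩⟩⟩
  rcases Nat.eq_zero_or_pos k with hk0 | hk
  · exfalso
    apply hK
    refine ⟨∅, ∅, by simp [hk0], by simp [hk0], ?_⟩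
    intro u hu
    exact absurd hu (Finset.notMem_empty u)
  have hK' : ¬ ∃ (U : Finset (Fin m)) (V : Finset (Fin n)), U.card = k ∧ V.card = k ∧
      ∀ u ∈ U, ∀ v ∈ V, sa u ≤ rx v ∧ rx v ≤ sb u ∧ ry v ≤ sy u := by
    rintro ⟨U, V, hU, hV, h⟩
    exact hK ⟨U, V, hU, hV, fun u hu v hv => (hAE u v).mpr (h u hu v hv)⟩
  set F : Finset (Fin m × Fin n) :=
    Finset.univ.filter (fun q => sa q.1 ≤ rx q.2 ∧ rx q.2 ≤ sb q.1 ∧ ry q.2 ≤ sy q.1) with hF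
  have hset : {q : Fin m × Fin n | A q.1 q.2} = ↑F := by
    ext q
    simp [hF, hAE q.1 q.2]
  rw [hset, Set.ncard_coe_finset]
  have hfib : F.card = ∑ u : Fin m,
      ((Finset.univ : Finset (Fin n)).filter
        (fun v => sa u ≤ rx v ∧ rx v ≤ sb u ∧ ry v ≤ sy u)).card := by
    rw [Finset.card_eq_sum_card_fiberwise (f := Prod.fst)
      (t := (Finset.univ : Finset (Fin m))) (fun x _ => Finset.mem_univ _)]
    refine Finset.sum_congr rfl (fun u _ => ?_)
    apply Finset.card_bij (fun q _ => q.2)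
    · rintro ⟨a, b⟩ hq
      simp only [hF, Finset.mem_filter, Finset.mem_univ, true_and] at hq ⊢
      obtain ⟨hE, ha⟩ := hq
      subst ha
      exact hE
    · rintro ⟨a, b⟩ ha ⟨c, d⟩ hc h
      simp only [hF, Finset.mem_filter] at ha hc
      obtain ⟨-, ha2⟩ := ha
      obtain ⟨-, hc2⟩ := hc
      simp only at h
      subst ha2 hc2
      simp [Prod.ext_iff, h]
    · intro v hv
      simp only [Finset.mem_filter, Finset.mem_univ, true_and] at hv
      refine ⟨(u, v), ?_, rfl⟩
      simp [hF, hv]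
  rw [hfib]
  have := stmt6_aux sa sb sy rx ry hk hK' (m + n) Finset.univ Finset.univ
    (by simp)
  simpa using this
end

section
/- Let T be a finite set and let P_1, P_2, P_3 be three strict partial orders on T such that every pair of distinct elements of T is comparable in at least one P_i. If in each P_i every element has at most k−2 successors within T, then |T| ≤ 6(k−1) − 1, i.e., |T| < 6(k−1). -/
lemma fib_card' {α : Type*} [DecidableEq α] (T : Finset α) (q : α → α → Prop)
    [∀ x y, Decidable (q x y)] :
    ((T ×ˢ T).filter fun p => q p.1 p.2).card = ∑ x ∈ T, (T.filter fun y => q x y).card := by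
  rw [Finset.card_eq_sum_card_fiberwise (f := Prod.fst) (t := T)
    (fun p hp => (Finset.mem_product.1 (Finset.mem_filter.1 hp).1).1)]
  refine Finset.sum_congr rfl fun x hx => ?_
  refine Finset.card_bij (fun p _ => p.2) ?_ ?_ ?_
  · intro p hp
    simp only [Finset.mem_filter, Finset.mem_product] at hp ⊢
    obtain ⟨⟨⟨h1, h2⟩, h3⟩, h4⟩ := hp
    exact ⟨h2, h4 ▸ h3⟩
  · rintro ⟨a, b⟩ ha ⟨c, d⟩ hc h
    simp only [Finset.mem_filter] at ha hc
    simp_all [Prod.ext_iff]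
  · intro b hb
    simp only [Finset.mem_filter, Finset.mem_product] at hb
    exact ⟨(x, b), by simp [hb.1, hb.2, hx], rfl⟩

/-- Let `T` be a finite set and `P 0, P 1, P 2` three strict partial orders (irreflexive
and transitive relations) such that every pair of distinct elements of `T` is comparable
in at least one of them. If in each `P i` every element of `T` has at most `k - 2`
successors within `T`, then `|T| < 6(k-1)`. -/
theorem stmt_9 {α : Type*} {k : ℕ} (hk : 2 ≤ k) (T : Finset α)
    (P : Fin 3 → α → α → Prop)
    (hirr : ∀ i x, ¬ P i x x)
    (htrans : ∀ i x y z, P i x y → P i y z → P i x z)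
    (hcomp : ∀ x ∈ T, ∀ y ∈ T, x ≠ y → ∃ i, P i x y ∨ P i y x)
    (hsucc : ∀ i, ∀ x ∈ T, {y | y ∈ T ∧ P i x y}.ncard ≤ k - 2) :
    T.card < 6 * (k - 1) := by
  classical
  set n := T.card with hn
  rcases Nat.eq_zero_or_pos n with h0 | hpos
  · omega
  -- sets of ordered pairs
  set D := (T ×ˢ T).filter (fun p => p.1 ≠ p.2) with hD
  set A := fun i : Fin 3 => (T ×ˢ T).filter (fun p => P i p.1 p.2) with hA
  set B := fun i : Fin 3 => (T ×ˢ T).filter (fun p => P i p.2 p.1) with hB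
  -- card D = n * (n-1)
  have hDcard : D.card = n * (n - 1) := by
    rw [hD, fib_card' T (fun x y => x ≠ y)]
    rw [Finset.sum_congr rfl fun x hx => ?_]
    · rw [Finset.sum_const, smul_eq_mul]
    · show (T.filter fun y => x ≠ y).card = n - 1
      have : (T.filter fun y => x ≠ y) = T.erase x := by
        ext y; simp [Finset.mem_erase, and_comm, ne_comm]
      rw [this, Finset.card_erase_of_mem hx]
  -- card A i ≤ n * (k-2)
  have hAcard : ∀ i, (A i).card ≤ n * (k - 2) := by
    intro i
    rw [hA, fib_card' T (fun x y => P i x y)]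
    calc ∑ x ∈ T, (T.filter fun y => P i x y).card
        ≤ ∑ _x ∈ T, (k - 2) := by
          refine Finset.sum_le_sum fun x hx => ?_
          have := hsucc i x hx
          have heq : {y | y ∈ T ∧ P i x y} = ↑(T.filter fun y => P i x y) := by
            ext y; simp
          rwa [heq, Set.ncard_coe_finset] at this
      _ = n * (k - 2) := by rw [Finset.sum_const, smul_eq_mul]
  -- card B i ≤ n * (k-2) via swap
  have hBcard : ∀ i, (B i).card ≤ n * (k - 2) := by
    intro i
    have himg : B i = (A i).image Prod.swap := by
      ext ⟨a, b⟩
      simp only [hA, hB, Finset.mem_image, Finset.mem_filter, Finset.mem_product]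
      constructor
      · rintro ⟨⟨ha, hb⟩, hp⟩; exact ⟨(b, a), ⟨⟨hb, ha⟩, hp⟩, rfl⟩
      · rintro ⟨⟨c, d⟩, ⟨⟨hc, hd⟩, hp⟩, h⟩
        obtain ⟨rfl, rfl⟩ : d = a ∧ c = b := by
          simpa [Prod.ext_iff, and_comm] using h
        exact ⟨⟨hd, hc⟩, hp⟩
    rw [himg]
    exact le_trans (Finset.card_image_le) (hAcard i)
  -- D covered by union
  have hsub : D ⊆ A 0 ∪ B 0 ∪ A 1 ∪ B 1 ∪ A 2 ∪ B 2 := by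
    intro p hp
    simp only [hD, Finset.mem_filter, Finset.mem_product] at hp
    obtain ⟨⟨h1, h2⟩, h3⟩ := hp
    obtain ⟨i, hi⟩ := hcomp p.1 h1 p.2 h2 h3
    have hmem : p ∈ A i ∪ B i := by
      simp only [hA, hB, Finset.mem_union, Finset.mem_filter, Finset.mem_product]
      rcases hi with h | h
      · exact Or.inl ⟨⟨h1, h2⟩, h⟩
      · exact Or.inr ⟨⟨h1, h2⟩, h⟩
    fin_cases i <;> simp only [Finset.mem_union] at hmem ⊢ <;> tauto
  have hkey : n * (n - 1) ≤ 6 * (n * (k - 2)) := by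
    calc n * (n - 1) = D.card := hDcard.symm
      _ ≤ (A 0 ∪ B 0 ∪ A 1 ∪ B 1 ∪ A 2 ∪ B 2).card := Finset.card_le_card hsub
      _ ≤ (A 0).card + (B 0).card + (A 1).card + (B 1).card + (A 2).card + (B 2).card := by
          have u5 := Finset.card_union_le (A 0 ∪ B 0 ∪ A 1 ∪ B 1 ∪ A 2) (B 2)
          have u4 := Finset.card_union_le (A 0 ∪ B 0 ∪ A 1 ∪ B 1) (A 2)
          have u3 := Finset.card_union_le (A 0 ∪ B 0 ∪ A 1) (B 1)
          have u2 := Finset.card_union_le (A 0 ∪ B 0) (A 1)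
          have u1 := Finset.card_union_le (A 0) (B 0)
          omega
      _ ≤ 6 * (n * (k - 2)) := by
          have := hAcard 0; have := hBcard 0; have := hAcard 1
          have := hBcard 1; have := hAcard 2; have := hBcard 2
          omega
  have : n - 1 ≤ 6 * (k - 2) := by
    have h' : n * (n - 1) ≤ n * (6 * (k - 2)) := by
      calc n * (n-1) ≤ 6 * (n * (k-2)) := hkey
        _ = n * (6 * (k-2)) := by ring
    exact Nat.le_of_mul_le_mul_left h' hpos
  omega
end

section
/- Let G = (U ∪ V, E) be a bipartite graph with |U| = m, |V| = n, admitting a representation where each u ∈ U is a horizontal segment and each v ∈ V is a bottomless rectangle in ℝ², with u ~ v iff the segment of u is contained in the rectangle of v. If G contains no K_{k,k}, then |E| ≤ (3m + 6n)(k−1). -/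
open Finset

open scoped Classical in
private noncomputable def nbrU {m n : ℕ} (A : Fin m → Fin n → Prop) (u : Fin m) :
    Finset (Fin n) := Finset.univ.filter (fun v => A u v)

open scoped Classical in
private noncomputable def deepE {m n : ℕ} (k : ℕ) (ra rb rc : Fin n → ℝ)
    (A : Fin m → Fin n → Prop) (u : Fin m) (v : Fin n) : Prop :=
  k ≤ ((nbrU A u).filter (fun v' => ra v' ≤ ra v)).card ∧
  k ≤ ((nbrU A u).filter (fun v' => rb v ≤ rb v')).card ∧
  k ≤ ((nbrU A u).filter (fun v' => rc v ≤ rc v')).card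

private def abv {m : ℕ} (sy : Fin m → ℝ) (x y : Fin m) : Prop :=
  sy y < sy x ∨ (sy y = sy x ∧ x < y)

private lemma abv_sy {m : ℕ} {sy : Fin m → ℝ} {x y : Fin m} (h : abv sy x y) :
    sy y ≤ sy x := h.elim le_of_lt (fun h' => le_of_eq h'.1)

private lemma abv_irrefl {m : ℕ} (sy : Fin m → ℝ) (x : Fin m) : ¬ abv sy x x := by
  rintro (h | ⟨_, h⟩)
  · exact lt_irrefl _ h
  · exact lt_irrefl _ h

private lemma abv_ne {m : ℕ} {sy : Fin m → ℝ} {x y : Fin m} (h : abv sy x y) : x ≠ y := by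
  rintro rfl; exact abv_irrefl sy x h

private lemma abv_total {m : ℕ} (sy : Fin m → ℝ) {x y : Fin m} (h : x ≠ y) :
    abv sy x y ∨ abv sy y x := by
  rcases lt_trichotomy (sy x) (sy y) with h1 | h1 | h1
  · exact Or.inr (Or.inl h1)
  · rcases lt_or_gt_of_ne h with h2 | h2
    · exact Or.inl (Or.inr ⟨h1.symm, h2⟩)
    · exact Or.inr (Or.inr ⟨h1, h2⟩)
  · exact Or.inl (Or.inl h1)

private lemma abv_asymm {m : ℕ} {sy : Fin m → ℝ} {x y : Fin m}
    (h1 : abv sy x y) (h2 : abv sy y x) : False := by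
  rcases h1 with h1 | ⟨e1, l1⟩ <;> rcases h2 with h2 | ⟨e2, l2⟩
  · exact absurd (h1.trans h2) (lt_irrefl _)
  · exact absurd h1 (by rw [e2]; exact lt_irrefl _)
  · exact absurd h2 (by rw [e1]; exact lt_irrefl _)
  · exact absurd (l1.trans l2) (lt_irrefl _)

/-- rank bound: at most `k-1` elements have fewer than `k` elements `≤`-below them. -/
private lemma rank_bound_le {α : Type*} (N : Finset α) (f : α → ℝ) (k : ℕ) :
    (N.filter (fun x => (N.filter (fun y => f y ≤ f x)).card < k)).card ≤ k - 1 := by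
  classical
  rcases (N.filter (fun x => (N.filter (fun y => f y ≤ f x)).card < k)).eq_empty_or_nonempty
    with h | h
  · rw [h]; simp
  · obtain ⟨x₀, hx₀, hmax⟩ := Finset.exists_max_image _ f h
    have h2 := (Finset.mem_filter.1 hx₀).2
    have hsub : (N.filter (fun x => (N.filter (fun y => f y ≤ f x)).card < k)) ⊆
        N.filter (fun y => f y ≤ f x₀) :=
      fun y hy => Finset.mem_filter.2 ⟨(Finset.mem_filter.1 hy).1, hmax y hy⟩
    have h3 := Finset.card_le_card hsub
    omega

private lemma rank_bound_ge {α : Type*} (N : Finset α) (f : α → ℝ) (k : ℕ) :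
    (N.filter (fun x => (N.filter (fun y => f x ≤ f y)).card < k)).card ≤ k - 1 := by
  classical
  rcases (N.filter (fun x => (N.filter (fun y => f x ≤ f y)).card < k)).eq_empty_or_nonempty
    with h | h
  · rw [h]; simp
  · obtain ⟨x₀, hx₀, hmin⟩ := Finset.exists_min_image _ f h
    have h2 := (Finset.mem_filter.1 hx₀).2
    have hsub : (N.filter (fun x => (N.filter (fun y => f x ≤ f y)).card < k)) ⊆
        N.filter (fun y => f x₀ ≤ f y) :=
      fun y hy => Finset.mem_filter.2 ⟨(Finset.mem_filter.1 hy).1, hmin y hy⟩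
    have h3 := Finset.card_le_card hsub
    omega

private lemma card_le_sum_fst {α β : Type*} [DecidableEq α] (Q : Finset (α × β)) (S : Finset α)
    (g : α → Finset β) (h : ∀ p ∈ Q, p.1 ∈ S ∧ p.2 ∈ g p.1) :
    Q.card ≤ ∑ x ∈ S, (g x).card := by
  classical
  rw [Finset.card_eq_sum_card_fiberwise (f := Prod.fst) (fun p hp => (h p hp).1)]
  refine Finset.sum_le_sum fun x _ => ?_
  refine Finset.card_le_card_of_injOn Prod.snd (fun p hp => ?_) (fun p hp q hq hpq => ?_)
  · obtain ⟨hpQ, hpx⟩ := Finset.mem_filter.1 hp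
    have h2 := (h p hpQ).2
    rwa [hpx] at h2
  · have hpx := (Finset.mem_filter.1 hp).2
    have hqx := (Finset.mem_filter.1 hq).2
    exact Prod.ext (hpx.trans hqx.symm) hpq

private lemma card_le_sum_snd {α β : Type*} [DecidableEq β] (Q : Finset (α × β)) (S : Finset β)
    (g : β → Finset α) (h : ∀ p ∈ Q, p.2 ∈ S ∧ p.1 ∈ g p.2) :
    Q.card ≤ ∑ x ∈ S, (g x).card := by
  classical
  rw [Finset.card_eq_sum_card_fiberwise (f := Prod.snd) (fun p hp => (h p hp).1)]
  refine Finset.sum_le_sum fun x _ => ?_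
  refine Finset.card_le_card_of_injOn Prod.fst (fun p hp => ?_) (fun p hp q hq hpq => ?_)
  · obtain ⟨hpQ, hpx⟩ := Finset.mem_filter.1 hp
    have h2 := (h p hpQ).2
    rwa [hpx] at h2
  · have hpx := (Finset.mem_filter.1 hp).2
    have hqx := (Finset.mem_filter.1 hq).2
    exact Prod.ext hpq (hpx.trans hqx.symm)

private lemma bucket_bound {m n k : ℕ} (hk : 2 ≤ k) (A : Fin m → Fin n → Prop)
    (hK2 : ∀ (U : Finset (Fin m)) (V : Finset (Fin n)), k ≤ U.card → k ≤ V.card →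
      (∀ u ∈ U, ∀ v ∈ V, A u v) → False)
    (x : Fin m) (B : Finset (Fin m)) (V : Finset (Fin n))
    (hxB : x ∉ B) (hV : k ≤ V.card)
    (hadj : ∀ u ∈ insert x B, ∀ v' ∈ V, A u v') :
    B.card ≤ k - 2 := by
  by_contra h
  push_neg at h
  have hcard : k ≤ (insert x B).card := by
    rw [Finset.card_insert_of_notMem hxB]; omega
  exact hK2 _ _ hcard hV hadj

open scoped Classical in
/-- the shallow edges at a fixed `u` are at most `3(k-1)` many. -/
private lemma shallow_bound {m n : ℕ} (k : ℕ) (ra rb rc : Fin n → ℝ)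
    (A : Fin m → Fin n → Prop) (u : Fin m) :
    ((nbrU A u).filter (fun v => ¬ deepE k ra rb rc A u v)).card ≤ 3 * (k - 1) := by
  classical
  set N := nbrU A u with hN
  have hsub : (N.filter (fun v => ¬ deepE k ra rb rc A u v)) ⊆
      (N.filter (fun x => (N.filter (fun y => ra y ≤ ra x)).card < k)) ∪
      ((N.filter (fun x => (N.filter (fun y => rb x ≤ rb y)).card < k)) ∪
       (N.filter (fun x => (N.filter (fun y => rc x ≤ rc y)).card < k))) := by
    intro v hv
    obtain ⟨hvN, hnd⟩ := Finset.mem_filter.1 hv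
    simp only [deepE, not_and_or, not_le] at hnd
    rcases hnd with h | h | h
    · exact Finset.mem_union.2 (Or.inl (Finset.mem_filter.2 ⟨hvN, h⟩))
    · exact Finset.mem_union.2 (Or.inr (Finset.mem_union.2 (Or.inl
        (Finset.mem_filter.2 ⟨hvN, h⟩))))
    · exact Finset.mem_union.2 (Or.inr (Finset.mem_union.2 (Or.inr
        (Finset.mem_filter.2 ⟨hvN, h⟩))))
  have h1 := rank_bound_le N ra k
  have h2 := rank_bound_ge N rb k
  have h3 := rank_bound_ge N rc k
  have hc := Finset.card_le_card hsub
  have hu1 := Finset.card_union_le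
    (N.filter (fun x => (N.filter (fun y => ra y ≤ ra x)).card < k))
    ((N.filter (fun x => (N.filter (fun y => rb x ≤ rb y)).card < k)) ∪
     (N.filter (fun x => (N.filter (fun y => rc x ≤ rc y)).card < k)))
  have hu2 := Finset.card_union_le
    (N.filter (fun x => (N.filter (fun y => rb x ≤ rb y)).card < k))
    (N.filter (fun x => (N.filter (fun y => rc x ≤ rc y)).card < k))
  omega

open scoped Classical in
/-- deep edges at a fixed `v` are at most `6(k-1)` many. -/
private lemma deep_bound {m n k : ℕ} (hk : 2 ≤ k)
    (sa sb sy : Fin m → ℝ) (ra rb rc : Fin n → ℝ) (A : Fin m → Fin n → Prop)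
    (hA' : ∀ u v, A u v ↔ (ra v ≤ sa u ∧ sb u ≤ rb v ∧ sy u ≤ rc v))
    (hK2 : ∀ (U : Finset (Fin m)) (V : Finset (Fin n)), k ≤ U.card → k ≤ V.card →
      (∀ u ∈ U, ∀ v ∈ V, A u v) → False)
    (v : Fin n) :
    (Finset.univ.filter (fun u => A u v ∧ deepE k ra rb rc A u v)).card ≤ 6 * (k - 1) := by
  classical
  set S := Finset.univ.filter (fun u => A u v ∧ deepE k ra rb rc A u v) with hS
  rcases Nat.eq_zero_or_pos S.card with hs0 | hs0
  · omega
  have hmemS : ∀ x ∈ S, A x v ∧ deepE k ra rb rc A x v := fun x hx => (Finset.mem_filter.1 hx).2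
  have hP : ∀ x ∈ S, ra v ≤ sa x ∧ sb x ≤ rb v ∧ sy x ≤ rc v :=
    fun x hx => (hA' x v).1 (hmemS x hx).1
  -- bucket a
  have haB : ∀ x ∈ S, (S.filter (fun y => abv sy x y ∧ sb y ≤ sb x)).card ≤ k - 2 := by
    intro x hx
    refine bucket_bound hk A hK2 x _ ((nbrU A x).filter (fun v' => ra v' ≤ ra v)) ?_
      (hmemS x hx).2.1 ?_
    · intro hmem
      exact abv_irrefl sy x (Finset.mem_filter.1 hmem).2.1
    · intro u' hu' v' hv'
      obtain ⟨hv'N, hv'ra⟩ := Finset.mem_filter.1 hv'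
      have hAxv' : A x v' := (Finset.mem_filter.1 hv'N).2
      rcases Finset.mem_insert.1 hu' with rfl | hu'
      · exact hAxv'
      · obtain ⟨hu'S, habv', hsb'⟩ :
            u' ∈ S ∧ abv sy x u' ∧ sb u' ≤ sb x := by
          have h0 := Finset.mem_filter.1 hu'
          exact ⟨h0.1, h0.2.1, h0.2.2⟩
        have hPx := (hA' x v').1 hAxv'
        have hPu' := hP u' hu'S
        exact (hA' u' v').2 ⟨le_trans hv'ra hPu'.1, le_trans hsb' hPx.2.1,
          le_trans (abv_sy habv') hPx.2.2⟩
  -- bucket b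
  have hbB : ∀ x ∈ S, (S.filter (fun y => abv sy x y ∧ sa x ≤ sa y)).card ≤ k - 2 := by
    intro x hx
    refine bucket_bound hk A hK2 x _ ((nbrU A x).filter (fun v' => rb v ≤ rb v')) ?_
      (hmemS x hx).2.2.1 ?_
    · intro hmem
      exact abv_irrefl sy x (Finset.mem_filter.1 hmem).2.1
    · intro u' hu' v' hv'
      obtain ⟨hv'N, hv'rb⟩ := Finset.mem_filter.1 hv'
      have hAxv' : A x v' := (Finset.mem_filter.1 hv'N).2
      rcases Finset.mem_insert.1 hu' with rfl | hu'
      · exact hAxv'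
      · obtain ⟨hu'S, habv', hsa'⟩ :
            u' ∈ S ∧ abv sy x u' ∧ sa x ≤ sa u' := by
          have h0 := Finset.mem_filter.1 hu'
          exact ⟨h0.1, h0.2.1, h0.2.2⟩
        have hPx := (hA' x v').1 hAxv'
        have hPu' := hP u' hu'S
        exact (hA' u' v').2 ⟨le_trans hPx.1 hsa', le_trans hPu'.2.1 hv'rb,
          le_trans (abv_sy habv') hPx.2.2⟩
  -- bucket c
  have hcB : ∀ y ∈ S, (S.filter (fun x => abv sy x y ∧ sa y ≤ sa x ∧ sb x ≤ sb y)).card ≤ k - 2 := by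
    intro y hy
    refine bucket_bound hk A hK2 y _ ((nbrU A y).filter (fun v' => rc v ≤ rc v')) ?_
      (hmemS y hy).2.2.2 ?_
    · intro hmem
      exact abv_irrefl sy y (Finset.mem_filter.1 hmem).2.1
    · intro u' hu' v' hv'
      obtain ⟨hv'N, hv'rc⟩ := Finset.mem_filter.1 hv'
      have hAyv' : A y v' := (Finset.mem_filter.1 hv'N).2
      rcases Finset.mem_insert.1 hu' with rfl | hu'
      · exact hAyv'
      · obtain ⟨hu'S, habv', hsa', hsb'⟩ :
            u' ∈ S ∧ abv sy u' y ∧ sa y ≤ sa u' ∧ sb u' ≤ sb y := by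
          have h0 := Finset.mem_filter.1 hu'
          exact ⟨h0.1, h0.2.1, h0.2.2.1, h0.2.2.2⟩
        have hPy := (hA' y v').1 hAyv'
        have hPu' := hP u' hu'S
        exact (hA' u' v').2 ⟨le_trans hPy.1 hsa', le_trans hsb' hPy.2.1,
          le_trans hPu'.2.2 hv'rc⟩
  -- pair counting
  set Pr := (S ×ˢ S).filter (fun p => abv sy p.1 p.2) with hPrDef
  set Pr' := (S ×ˢ S).filter (fun p => abv sy p.2 p.1) with hPr'Def
  have hoff : S.offDiag = Pr ∪ Pr' := by
    ext p
    simp only [Finset.mem_offDiag, hPrDef, hPr'Def, Finset.mem_union, Finset.mem_filter,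
      Finset.mem_product]
    constructor
    · rintro ⟨h1, h2, h3⟩
      rcases abv_total sy h3 with h | h
      · exact Or.inl ⟨⟨h1, h2⟩, h⟩
      · exact Or.inr ⟨⟨h1, h2⟩, h⟩
    · rintro (⟨⟨h1, h2⟩, h⟩ | ⟨⟨h1, h2⟩, h⟩)
      · exact ⟨h1, h2, abv_ne h⟩
      · exact ⟨h1, h2, (abv_ne h).symm⟩
  have hdisj : Disjoint Pr Pr' := by
    rw [Finset.disjoint_left]
    intro p hp hp'
    exact abv_asymm ((Finset.mem_filter.1 hp).2) ((Finset.mem_filter.1 hp').2)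
  have hswap : Pr'.card = Pr.card := by
    refine Finset.card_bij' (fun p _ => p.swap) (fun p _ => p.swap) ?_ ?_ ?_ ?_
    · intro p hp
      obtain ⟨hpp, hpa⟩ := Finset.mem_filter.1 hp
      obtain ⟨h1, h2⟩ := Finset.mem_product.1 hpp
      exact Finset.mem_filter.2 ⟨Finset.mem_product.2 ⟨h2, h1⟩, hpa⟩
    · intro p hp
      obtain ⟨hpp, hpa⟩ := Finset.mem_filter.1 hp
      obtain ⟨h1, h2⟩ := Finset.mem_product.1 hpp
      exact Finset.mem_filter.2 ⟨Finset.mem_product.2 ⟨h2, h1⟩, hpa⟩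
    · intro p _; exact Prod.swap_swap p
    · intro p _; exact Prod.swap_swap p
  have hoffcard : S.card * S.card - S.card = Pr.card + Pr.card := by
    rw [← Finset.offDiag_card, hoff, Finset.card_union_of_disjoint hdisj, hswap]
  -- cover Pr by three bucket families
  have hQ1 : (Pr.filter (fun p => sb p.2 ≤ sb p.1)).card ≤ S.card * (k - 2) := by
    have hle := card_le_sum_fst (Pr.filter (fun p => sb p.2 ≤ sb p.1)) S
      (fun x => S.filter (fun y => abv sy x y ∧ sb y ≤ sb x)) ?_
    · refine hle.trans ?_
      calc ∑ x ∈ S, (S.filter (fun y => abv sy x y ∧ sb y ≤ sb x)).card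
          ≤ ∑ x ∈ S, (k - 2) := Finset.sum_le_sum haB
        _ = S.card * (k - 2) := by rw [Finset.sum_const, smul_eq_mul]
    · intro p hp
      obtain ⟨hpPr, hpsb⟩ := Finset.mem_filter.1 hp
      obtain ⟨hpp, hpa⟩ := Finset.mem_filter.1 hpPr
      obtain ⟨h1, h2⟩ := Finset.mem_product.1 hpp
      exact ⟨h1, Finset.mem_filter.2 ⟨h2, hpa, hpsb⟩⟩
  have hQ2 : (Pr.filter (fun p => ¬ sb p.2 ≤ sb p.1 ∧ sa p.1 ≤ sa p.2)).card
      ≤ S.card * (k - 2) := by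
    have hle := card_le_sum_fst (Pr.filter (fun p => ¬ sb p.2 ≤ sb p.1 ∧ sa p.1 ≤ sa p.2)) S
      (fun x => S.filter (fun y => abv sy x y ∧ sa x ≤ sa y)) ?_
    · refine hle.trans ?_
      calc ∑ x ∈ S, (S.filter (fun y => abv sy x y ∧ sa x ≤ sa y)).card
          ≤ ∑ x ∈ S, (k - 2) := Finset.sum_le_sum hbB
        _ = S.card * (k - 2) := by rw [Finset.sum_const, smul_eq_mul]
    · intro p hp
      obtain ⟨hpPr, hpc⟩ := Finset.mem_filter.1 hp
      obtain ⟨hpp, hpa⟩ := Finset.mem_filter.1 hpPr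
      obtain ⟨h1, h2⟩ := Finset.mem_product.1 hpp
      exact ⟨h1, Finset.mem_filter.2 ⟨h2, hpa, hpc.2⟩⟩
  have hQ3 : (Pr.filter (fun p => ¬ sb p.2 ≤ sb p.1 ∧ ¬ sa p.1 ≤ sa p.2)).card
      ≤ S.card * (k - 2) := by
    have hle := card_le_sum_snd (Pr.filter (fun p => ¬ sb p.2 ≤ sb p.1 ∧ ¬ sa p.1 ≤ sa p.2)) S
      (fun y => S.filter (fun x => abv sy x y ∧ sa y ≤ sa x ∧ sb x ≤ sb y)) ?_
    · refine hle.trans ?_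
      calc ∑ y ∈ S, (S.filter (fun x => abv sy x y ∧ sa y ≤ sa x ∧ sb x ≤ sb y)).card
          ≤ ∑ y ∈ S, (k - 2) := Finset.sum_le_sum hcB
        _ = S.card * (k - 2) := by rw [Finset.sum_const, smul_eq_mul]
    · intro p hp
      obtain ⟨hpPr, hpc⟩ := Finset.mem_filter.1 hp
      obtain ⟨hpp, hpa⟩ := Finset.mem_filter.1 hpPr
      obtain ⟨h1, h2⟩ := Finset.mem_product.1 hpp
      exact ⟨h2, Finset.mem_filter.2 ⟨h1, hpa, le_of_not_ge hpc.2, le_of_not_ge hpc.1⟩⟩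
  have hPrSplit : Pr.card ≤ (Pr.filter (fun p => sb p.2 ≤ sb p.1)).card
      + ((Pr.filter (fun p => ¬ sb p.2 ≤ sb p.1 ∧ sa p.1 ≤ sa p.2)).card
      + (Pr.filter (fun p => ¬ sb p.2 ≤ sb p.1 ∧ ¬ sa p.1 ≤ sa p.2)).card) := by
    have hsub : Pr ⊆ (Pr.filter (fun p => sb p.2 ≤ sb p.1))
        ∪ ((Pr.filter (fun p => ¬ sb p.2 ≤ sb p.1 ∧ sa p.1 ≤ sa p.2))
        ∪ (Pr.filter (fun p => ¬ sb p.2 ≤ sb p.1 ∧ ¬ sa p.1 ≤ sa p.2))) := by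
      intro p hp
      by_cases h1 : sb p.2 ≤ sb p.1
      · exact Finset.mem_union.2 (Or.inl (Finset.mem_filter.2 ⟨hp, h1⟩))
      · by_cases h2 : sa p.1 ≤ sa p.2
        · exact Finset.mem_union.2 (Or.inr (Finset.mem_union.2 (Or.inl
            (Finset.mem_filter.2 ⟨hp, h1, h2⟩))))
        · exact Finset.mem_union.2 (Or.inr (Finset.mem_union.2 (Or.inr
            (Finset.mem_filter.2 ⟨hp, h1, h2⟩))))
    have h4 := Finset.card_le_card hsub
    have h5 := Finset.card_union_le (Pr.filter (fun p => sb p.2 ≤ sb p.1))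
      ((Pr.filter (fun p => ¬ sb p.2 ≤ sb p.1 ∧ sa p.1 ≤ sa p.2))
      ∪ (Pr.filter (fun p => ¬ sb p.2 ≤ sb p.1 ∧ ¬ sa p.1 ≤ sa p.2)))
    have h6 := Finset.card_union_le (Pr.filter (fun p => ¬ sb p.2 ≤ sb p.1 ∧ sa p.1 ≤ sa p.2))
      (Pr.filter (fun p => ¬ sb p.2 ≤ sb p.1 ∧ ¬ sa p.1 ≤ sa p.2))
    omega
  -- conclude
  have hPrBound : Pr.card ≤ 3 * (S.card * (k - 2)) := by omega
  have hmul : S.card * (S.card - 1) = S.card * S.card - S.card := Nat.mul_pred ..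
  have hfinal : S.card * (S.card - 1) ≤ S.card * (6 * (k - 2)) := by
    rw [hmul]
    have : 3 * (S.card * (k - 2)) + 3 * (S.card * (k - 2)) = S.card * (6 * (k - 2)) := by ring
    omega
  have hlast : S.card - 1 ≤ 6 * (k - 2) := Nat.le_of_mul_le_mul_left hfinal hs0
  omega

/-- Let `G` be a bipartite graph where each `u : Fin m` is represented by a horizontal
segment `[sa u, sb u] × {sy u}` and each `v : Fin n` by a bottomless rectangle
`[ra v, rb v] × (-∞, rc v]`, with `u ~ v` iff the segment is contained in the rectangle.
If `G` contains no `K_{k,k}`, then `G` has at most `(3m + 6n)(k-1)` edges. -/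
theorem stmt_10 {m n k : ℕ} (sa sb sy : Fin m → ℝ) (ra rb rc : Fin n → ℝ)
    (hseg : ∀ u, sa u ≤ sb u)
    (A : Fin m → Fin n → Prop)
    (hA : ∀ u v, A u v ↔
      (Set.Icc (sa u) (sb u) ×ˢ ({sy u} : Set ℝ)) ⊆
        (Set.Icc (ra v) (rb v) ×ˢ Set.Iic (rc v)))
    (hK : ¬ ∃ (U : Finset (Fin m)) (V : Finset (Fin n)), U.card = k ∧ V.card = k ∧
      ∀ u ∈ U, ∀ v ∈ V, A u v) :
    {q : Fin m × Fin n | A q.1 q.2}.ncard ≤ (3 * m + 6 * n) * (k - 1) := by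
  classical
  have hA' : ∀ u v, A u v ↔ (ra v ≤ sa u ∧ sb u ≤ rb v ∧ sy u ≤ rc v) := by
    intro u v
    rw [hA]
    constructor
    · intro h
      have h1 : ((sa u, sy u) : ℝ × ℝ) ∈ Set.Icc (ra v) (rb v) ×ˢ Set.Iic (rc v) :=
        h ⟨⟨le_rfl, hseg u⟩, rfl⟩
      have h2 : ((sb u, sy u) : ℝ × ℝ) ∈ Set.Icc (ra v) (rb v) ×ˢ Set.Iic (rc v) :=
        h ⟨⟨hseg u, le_rfl⟩, rfl⟩
      exact ⟨h1.1.1, h2.1.2, h1.2⟩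
    · rintro ⟨h1, h2, h3⟩ ⟨x, y⟩ ⟨⟨hx1, hx2⟩, hy⟩
      have hy' : y = sy u := hy
      exact ⟨⟨h1.trans hx1, hx2.trans h2⟩, le_of_eq_of_le hy' h3⟩
  have hEfeq : {q : Fin m × Fin n | A q.1 q.2}
      = ↑(Finset.univ.filter (fun q : Fin m × Fin n => A q.1 q.2)) := by
    ext q; simp
  rw [hEfeq, Set.ncard_coe_finset]
  rcases Nat.lt_or_ge k 2 with hk | hk
  · interval_cases k
    · exact absurd ⟨∅, ∅, Finset.card_empty, Finset.card_empty, by simp⟩ hK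
    · have hempty : Finset.univ.filter (fun q : Fin m × Fin n => A q.1 q.2) = ∅ := by
        rw [Finset.eq_empty_iff_forall_notMem]
        rintro ⟨u, v⟩ hq
        have hq' : A u v := (Finset.mem_filter.1 hq).2
        exact hK ⟨{u}, {v}, Finset.card_singleton u, Finset.card_singleton v, by
          intro a ha b hb
          rw [Finset.mem_singleton] at ha hb
          subst ha; subst hb; exact hq'⟩
      rw [hempty]
      simp
  · have hK2 : ∀ (U : Finset (Fin m)) (V : Finset (Fin n)), k ≤ U.card → k ≤ V.card →
        (∀ u ∈ U, ∀ v ∈ V, A u v) → False := by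
      intro U V hU hV hall
      obtain ⟨U₀, hU₀s, hU₀c⟩ := Finset.exists_subset_card_eq hU
      obtain ⟨V₀, hV₀s, hV₀c⟩ := Finset.exists_subset_card_eq hV
      exact hK ⟨U₀, V₀, hU₀c, hV₀c, fun u hu v' hv' => hall u (hU₀s hu) v' (hV₀s hv')⟩
    set Ef := Finset.univ.filter (fun q : Fin m × Fin n => A q.1 q.2) with hEf
    have hsplit := Finset.card_filter_add_card_filter_not
      (s := Ef) (p := fun q : Fin m × Fin n => deepE k ra rb rc A q.1 q.2)
    have hdeep : (Ef.filter (fun q : Fin m × Fin n => deepE k ra rb rc A q.1 q.2)).card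
        ≤ n * (6 * (k - 1)) := by
      have h1 := card_le_sum_snd
        (Ef.filter (fun q : Fin m × Fin n => deepE k ra rb rc A q.1 q.2))
        Finset.univ
        (fun v => Finset.univ.filter (fun u => A u v ∧ deepE k ra rb rc A u v)) ?_
      · refine h1.trans ?_
        calc ∑ v ∈ Finset.univ,
              (Finset.univ.filter (fun u => A u v ∧ deepE k ra rb rc A u v)).card
            ≤ ∑ _v ∈ (Finset.univ : Finset (Fin n)), 6 * (k - 1) :=
              Finset.sum_le_sum (fun v _ => deep_bound hk sa sb sy ra rb rc A hA' hK2 v)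
          _ = n * (6 * (k - 1)) := by
              rw [Finset.sum_const, smul_eq_mul, Finset.card_univ, Fintype.card_fin]
      · intro p hp
        obtain ⟨hpE, hpd⟩ := Finset.mem_filter.1 hp
        have hpA : A p.1 p.2 := (Finset.mem_filter.1 hpE).2
        exact ⟨Finset.mem_univ _, Finset.mem_filter.2 ⟨Finset.mem_univ _, hpA, hpd⟩⟩
    have hshallow : (Ef.filter (fun q : Fin m × Fin n => ¬ deepE k ra rb rc A q.1 q.2)).card
        ≤ m * (3 * (k - 1)) := by
      have h1 := card_le_sum_fst
        (Ef.filter (fun q : Fin m × Fin n => ¬ deepE k ra rb rc A q.1 q.2))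
        Finset.univ
        (fun u => (nbrU A u).filter (fun v => ¬ deepE k ra rb rc A u v)) ?_
      · refine h1.trans ?_
        calc ∑ u ∈ Finset.univ,
              ((nbrU A u).filter (fun v => ¬ deepE k ra rb rc A u v)).card
            ≤ ∑ _u ∈ (Finset.univ : Finset (Fin m)), 3 * (k - 1) :=
              Finset.sum_le_sum (fun u _ => shallow_bound k ra rb rc A u)
          _ = m * (3 * (k - 1)) := by
              rw [Finset.sum_const, smul_eq_mul, Finset.card_univ, Fintype.card_fin]
      · intro p hp
        obtain ⟨hpE, hpd⟩ := Finset.mem_filter.1 hp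
        have hpA : A p.1 p.2 := (Finset.mem_filter.1 hpE).2
        refine ⟨Finset.mem_univ _, Finset.mem_filter.2 ⟨?_, hpd⟩⟩
        exact Finset.mem_filter.2 ⟨Finset.mem_univ _, hpA⟩
    have hid : m * (3 * (k - 1)) + n * (6 * (k - 1)) = (3 * m + 6 * n) * (k - 1) := by ring
    omega
end

section
/- A bipartite graph G is a segment–bottomless-rectangle containment graph (horizontal segments contained in bottomless rectangles in ℝ²) if and only if G is the intersection of an interval containment bigraph and a point–ray intersection bigraph, i.e., G = G_x ∩ G_y on the same vertex set where G_x is an interval containment bigraph and G_y is a chain graph. -/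
lemma seg_sub_rect {a b y c d e : ℝ} (hab : a ≤ b) :
    (Set.Icc a b ×ˢ ({y} : Set ℝ)) ⊆ (Set.Icc c d ×ˢ Set.Iic e) ↔
      (Set.Icc a b ⊆ Set.Icc c d ∧ y ≤ e) := by
  constructor
  · intro h
    have hy : y ≤ e := by
      have := h (show ((a, y) : ℝ × ℝ) ∈ _ from ⟨Set.left_mem_Icc.2 hab, rfl⟩)
      exact this.2
    refine ⟨fun x hx => ?_, hy⟩
    exact (h (show ((x, y) : ℝ × ℝ) ∈ _ from ⟨hx, rfl⟩)).1
  · rintro ⟨h1, h2⟩ ⟨x, z⟩ ⟨hx, hz⟩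
    exact ⟨h1 hx, by simp_all [Set.mem_Iic]⟩

/-- A bipartite graph (given as a relation `E` between parts `α` and `β`) is a
segment–bottomless-rectangle containment graph if and only if it is the intersection
of an interval containment bigraph and a point–ray (chain) bigraph on the same
vertex set. -/
theorem stmt_11 {α β : Type*} (E : α → β → Prop) :
    (∃ (sa sb sy : α → ℝ) (ra rb rc : β → ℝ),
      (∀ u, sa u ≤ sb u) ∧
      ∀ u v, E u v ↔
        (Set.Icc (sa u) (sb u) ×ˢ ({sy u} : Set ℝ)) ⊆
          (Set.Icc (ra v) (rb v) ×ˢ Set.Iic (rc v)))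
    ↔
    (∃ EX EY : α → β → Prop,
      (∀ u v, E u v ↔ EX u v ∧ EY u v) ∧
      (∃ (ia ib : α → ℝ) (ja jb : β → ℝ),
        (∀ u, ia u ≤ ib u) ∧
        ∀ u v, EX u v ↔ Set.Icc (ia u) (ib u) ⊆ Set.Icc (ja v) (jb v)) ∧
      (∃ (p : α → ℝ) (r : β → ℝ), ∀ u v, EY u v ↔ r v ≤ p u)) := by
  constructor
  · rintro ⟨sa, sb, sy, ra, rb, rc, hab, hE⟩
    refine ⟨fun u v => Set.Icc (sa u) (sb u) ⊆ Set.Icc (ra v) (rb v),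
      fun u v => sy u ≤ rc v,
      fun u v => by rw [hE u v, seg_sub_rect (hab u)],
      ⟨sa, sb, ra, rb, hab, fun u v => Iff.rfl⟩,
      ⟨fun u => -(sy u), fun v => -(rc v), fun u v => by
        constructor <;> intro h <;> dsimp only at h ⊢ <;> linarith⟩⟩
  · rintro ⟨EX, EY, hE, ⟨ia, ib, ja, jb, hab, hX⟩, ⟨p, r, hY⟩⟩
    refine ⟨ia, ib, fun u => -(p u), ja, jb, fun v => -(r v), hab, fun u v => ?_⟩
    rw [hE u v, hX u v, hY u v, seg_sub_rect (hab u)]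
    constructor <;> rintro ⟨h1, h2⟩ <;> exact ⟨h1, by dsimp only at h2 ⊢; linarith⟩
end

section
/- Every point–rectangle intersection bigraph is in CONV², i.e., it is the intersection of two convex bipartite graphs on the same vertex set. -/
lemma exists_refine {α : Type*} [Fintype α] (g : α → ℝ) :
    ∃ f : α → ℝ, Function.Injective f ∧ ∀ a b, g a < g b → f a < f b := by
  classical
  let e := Fintype.equivFin α
  let K : α → Lex (ℝ × ℝ) := fun a => toLex (g a, (e a : ℝ))
  have hKinj : Function.Injective K := by
    intro a b h
    have : ((g a, (e a : ℝ)) : ℝ × ℝ) = (g b, (e b : ℝ)) := congrArg ofLex h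
    have h2 : (e a : ℝ) = (e b : ℝ) := congrArg Prod.snd this
    exact e.injective (Fin.ext (by exact_mod_cast h2))
  have hKmono : ∀ a b, g a < g b → K a < K b := fun a b h => Prod.Lex.left _ _ h
  let T : Finset (Lex (ℝ × ℝ)) := Finset.univ.image K
  let σ := T.orderIsoOfFin rfl
  have hmem : ∀ a, K a ∈ T := fun a => Finset.mem_image_of_mem K (Finset.mem_univ a)
  refine ⟨fun a => ((σ.symm ⟨K a, hmem a⟩ : Fin T.card) : ℝ), ?_, ?_⟩
  · intro a b h
    simp only at h
    have : σ.symm ⟨K a, hmem a⟩ = σ.symm ⟨K b, hmem b⟩ := by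
      exact Fin.ext (by exact_mod_cast h)
    have := σ.symm.injective this
    exact hKinj (by simpa [Subtype.ext_iff] using this)
  · intro a b h
    have h1 : (⟨K a, hmem a⟩ : T) < ⟨K b, hmem b⟩ := hKmono a b h
    have h2 : σ.symm ⟨K a, hmem a⟩ < σ.symm ⟨K b, hmem b⟩ := σ.symm.strictMono h1
    simp only
    exact_mod_cast h2


/-- A bipartite graph `E : α → β → Prop` is convex over its second part if there is a
linear ordering of `β` (an injection into `ℝ`) in which every `u : α` has a contiguous
neighborhood. -/
def ConvexOver {α β : Type*} (E : α → β → Prop) : Prop :=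
  ∃ f : β → ℝ, Function.Injective f ∧
    ∀ u v₁ v₂ v₃, f v₁ ≤ f v₂ → f v₂ ≤ f v₃ → E u v₁ → E u v₃ → E u v₂

/-- A convex bipartite graph: convex over one of its two parts. -/
def IsConvexBigraph {α β : Type*} (E : α → β → Prop) : Prop :=
  ConvexOver E ∨ ConvexOver (Function.swap E)

/-- Every point–rectangle intersection bigraph is in `CONV²`: it is the intersection of
two convex bipartite graphs on the same vertex set. -/
theorem stmt_15 {α β : Type*} [Fintype α] [Fintype β] (E : α → β → Prop)
    (P : α → ℝ × ℝ) (xl xr yl yr : β → ℝ)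
    (hE : ∀ a b, E a b ↔
      (P a).1 ∈ Set.Icc (xl b) (xr b) ∧ (P a).2 ∈ Set.Icc (yl b) (yr b)) :
    ∃ E₁ E₂ : α → β → Prop, IsConvexBigraph E₁ ∧ IsConvexBigraph E₂ ∧
      ∀ a b, E a b ↔ E₁ a b ∧ E₂ a b := by
  obtain ⟨f₁, hf₁inj, hf₁⟩ := exists_refine (fun a => (P a).1)
  obtain ⟨f₂, hf₂inj, hf₂⟩ := exists_refine (fun a => (P a).2)
  have hle₁ : ∀ a b, f₁ a ≤ f₁ b → (P a).1 ≤ (P b).1 := fun a b h => by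
    by_contra hc; exact (not_le.2 (hf₁ b a (lt_of_not_ge hc))) h
  have hle₂ : ∀ a b, f₂ a ≤ f₂ b → (P a).2 ≤ (P b).2 := fun a b h => by
    by_contra hc; exact (not_le.2 (hf₂ b a (lt_of_not_ge hc))) h
  refine ⟨fun a b => (P a).1 ∈ Set.Icc (xl b) (xr b),
          fun a b => (P a).2 ∈ Set.Icc (yl b) (yr b), ?_, ?_, ?_⟩
  · right
    exact ⟨f₁, hf₁inj, fun b a₁ a₂ a₃ h12 h23 ⟨l1, r1⟩ ⟨l3, r3⟩ =>
      ⟨l1.trans (hle₁ a₁ a₂ h12), (hle₁ a₂ a₃ h23).trans r3⟩⟩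
  · right
    exact ⟨f₂, hf₂inj, fun b a₁ a₂ a₃ h12 h23 ⟨l1, r1⟩ ⟨l3, r3⟩ =>
      ⟨l1.trans (hle₂ a₁ a₂ h12), (hle₂ a₂ a₃ h23).trans r3⟩⟩
  · exact hE
end

section
/- Every grid intersection graph (bipartite intersection graph of horizontal and vertical segments in the plane) is the intersection of two convex bipartite graphs on the same vertex set. -/
lemma exists_inj_compat {β : Type*} [Fintype β] (x : β → ℝ) :
    ∃ f : β → ℝ, Function.Injective f ∧ ∀ v w, x v < x w → f v < f w := by
  classical
  set g : β → ℕ := fun v => (Fintype.equivFin β v : ℕ) with hgdef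
  have hg : Function.Injective g := fun a b h =>
    (Fintype.equivFin β).injective (Fin.ext h)
  letI : LinearOrder β := LinearOrder.lift' (fun v => toLex (x v, g v))
    (fun a b h => by
      have h' : (x a, g a) = (x b, g b) := toLex.injective h
      exact hg (congrArg Prod.snd h'))
  let e := (monoEquivOfFin β rfl).symm
  refine ⟨fun v => ((e v : Fin _) : ℕ), ?_, ?_⟩
  · intro a b h
    exact e.injective (Fin.ext (Nat.cast_injective h))
  · intro v w hvw
    have hlt : v < w := by
      change toLex (x v, g v) < toLex (x w, g w)
      exact Prod.Lex.left _ _ hvw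
    show (((e v : Fin _) : ℕ) : ℝ) < (((e w : Fin _) : ℕ) : ℝ)
    exact_mod_cast e.strictMono hlt

/-- Every grid intersection graph (bipartite intersection graph of horizontal segments
and vertical segments in the plane) is the intersection of two convex bipartite graphs
on the same vertex set. -/
theorem stmt_16 {α β : Type*} [Fintype α] [Fintype β] (E : α → β → Prop)
    (sa sb sy : α → ℝ) (vx va vb : β → ℝ)
    (hE : ∀ a b, E a b ↔
      ((Set.Icc (sa a) (sb a) ×ˢ ({sy a} : Set ℝ)) ∩
        (({vx b} : Set ℝ) ×ˢ Set.Icc (va b) (vb b))).Nonempty) :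
    ∃ E₁ E₂ : α → β → Prop, IsConvexBigraph E₁ ∧ IsConvexBigraph E₂ ∧
      ∀ a b, E a b ↔ E₁ a b ∧ E₂ a b := by
  refine ⟨fun a b => vx b ∈ Set.Icc (sa a) (sb a),
          fun a b => sy a ∈ Set.Icc (va b) (vb b), ?_, ?_, ?_⟩
  · left
    obtain ⟨f, hf, hc⟩ := exists_inj_compat vx
    refine ⟨f, hf, ?_⟩
    intro u v₁ v₂ v₃ h12 h23 h1 h3
    have l12 : vx v₁ ≤ vx v₂ := by
      by_contra h; exact absurd h12 (not_le.mpr (hc _ _ (not_le.mp h)))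
    have l23 : vx v₂ ≤ vx v₃ := by
      by_contra h; exact absurd h23 (not_le.mpr (hc _ _ (not_le.mp h)))
    exact ⟨h1.1.trans l12, l23.trans h3.2⟩
  · right
    obtain ⟨f, hf, hc⟩ := exists_inj_compat sy
    refine ⟨f, hf, ?_⟩
    intro u v₁ v₂ v₃ h12 h23 h1 h3
    have l12 : sy v₁ ≤ sy v₂ := by
      by_contra h; exact absurd h12 (not_le.mpr (hc _ _ (not_le.mp h)))
    have l23 : sy v₂ ≤ sy v₃ := by
      by_contra h; exact absurd h23 (not_le.mpr (hc _ _ (not_le.mp h)))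
    exact ⟨h1.1.trans l12, l23.trans h3.2⟩
  · intro a b
    rw [hE a b]
    constructor
    · rintro ⟨p, ⟨hp1, hp2⟩, hq1, hq2⟩
      simp only [Set.mem_singleton_iff] at hp2 hq1
      dsimp only; rw [← hq1, ← hp2]; exact ⟨hp1, hq2⟩
    · rintro ⟨h1, h2⟩
      exact ⟨(vx b, sy a), ⟨h1, rfl⟩, rfl, h2⟩
end

section
/- Let G be a bipartite graph in which every vertex of the part U has an ordered neighborhood structure witnessing that G is [[0,1],[1,1]]-freeable, and suppose G contains no K_{k,k}. Then for n = |U| = |V|, the number of edges of G is at most 2n(k−1). -/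
open Finset

/-- Per column, at most `m` ones have fewer than `m` ones above them;
summing over columns bounds the set of such "column-light" entries. -/
lemma aux_bound {n m : ℕ} (N : Fin n → Fin n → Bool) :
    (Finset.univ.filter (fun p : Fin n × Fin n => N p.1 p.2 = true ∧
      (Finset.univ.filter (fun i' => i' < p.1 ∧ N i' p.2 = true)).card < m)).card
      ≤ n * m := by
  classical
  set T : Fin n → Finset (Fin n) := fun j =>
    Finset.univ.filter (fun i : Fin n => N i j = true ∧
      (Finset.univ.filter (fun i' => i' < i ∧ N i' j = true)).card < m) with hT
  have hmono : ∀ j : Fin n, ∀ i₁ i₂ : Fin n, i₁ < i₂ → N i₁ j = true →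
      (Finset.univ.filter (fun i' => i' < i₁ ∧ N i' j = true)).card <
      (Finset.univ.filter (fun i' => i' < i₂ ∧ N i' j = true)).card := by
    intro j i₁ i₂ hlt h1
    apply Finset.card_lt_card
    constructor
    · intro x hx
      simp only [Finset.mem_filter, Finset.mem_univ, true_and] at hx ⊢
      exact ⟨hx.1.trans hlt, hx.2⟩
    · intro hsub
      have : i₁ ∈ Finset.univ.filter (fun i' => i' < i₂ ∧ N i' j = true) := by
        simp [hlt, h1]
      have := hsub this
      simp at this
  have hTcard : ∀ j : Fin n, (T j).card ≤ m := by
    intro j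
    have hinj : Set.InjOn (fun i => (Finset.univ.filter
        (fun i' => i' < i ∧ N i' j = true)).card) (T j) := by
      intro i₁ h₁ i₂ h₂ heq
      simp only [hT, Finset.coe_filter, Set.mem_setOf_eq, Finset.mem_univ, true_and] at h₁ h₂
      by_contra hne
      rcases lt_or_gt_of_ne hne with hlt | hgt
      · exact absurd heq (Nat.ne_of_lt (hmono j i₁ i₂ hlt h₁.1))
      · exact absurd heq.symm (Nat.ne_of_lt (hmono j i₂ i₁ hgt h₂.1))
    have := Finset.card_le_card_of_injOn (t := Finset.range m)
      (fun i => (Finset.univ.filter (fun i' => i' < i ∧ N i' j = true)).card)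
      (fun i hi => by
        simp only [hT, Finset.mem_coe, Finset.mem_filter, Finset.mem_univ, true_and] at hi
        exact Finset.mem_range.mpr hi.2) hinj
    simpa using this
  have hsub : (Finset.univ.filter (fun p : Fin n × Fin n => N p.1 p.2 = true ∧
      (Finset.univ.filter (fun i' => i' < p.1 ∧ N i' p.2 = true)).card < m))
      ⊆ Finset.univ.biUnion (fun j : Fin n => (T j).image (fun i => (i, j))) := by
    intro p hp
    simp only [Finset.mem_filter, Finset.mem_univ, true_and] at hp
    simp only [Finset.mem_biUnion, Finset.mem_image, Finset.mem_univ, true_and]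
    exact ⟨p.2, p.1, by simp [hT, hp.1, hp.2], rfl⟩
  calc _ ≤ (Finset.univ.biUnion (fun j : Fin n => (T j).image (fun i => (i, j)))).card :=
        Finset.card_le_card hsub
    _ ≤ ∑ j : Fin n, ((T j).image (fun i => (i, j))).card := Finset.card_biUnion_le
    _ ≤ ∑ j : Fin n, m := by
        apply Finset.sum_le_sum
        intro j _
        exact (Finset.card_image_le).trans (hTcard j)
    _ = n * m := by simp [Finset.sum_const, Finset.card_univ, mul_comm]

/-- If a bipartite graph with parts of size `n` each is `[[0,1],[1,1]]`-freeable
(its biadjacency matrix, under the given orderings, avoids the pattern `[[0,1],[1,1]]`)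
and contains no `K_{k,k}`, then it has at most `2n(k-1)` edges. -/
theorem stmt_19 {n k : ℕ} (M : Fin n → Fin n → Bool)
    (hpat : ∀ i₁ i₂ : Fin n, ∀ j₁ j₂ : Fin n, i₁ < i₂ → j₁ < j₂ →
      ¬(M i₁ j₁ = false ∧ M i₁ j₂ = true ∧ M i₂ j₁ = true ∧ M i₂ j₂ = true))
    (hK : ¬ ∃ (R : Finset (Fin n)) (C : Finset (Fin n)), R.card = k ∧ C.card = k ∧
      ∀ i ∈ R, ∀ j ∈ C, M i j = true) :
    (Finset.univ.filter (fun p : Fin n × Fin n => M p.1 p.2 = true)).card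
      ≤ 2 * n * (k - 1) := by
  classical
  rcases Nat.eq_zero_or_pos k with hk0 | hk
  · exact absurd ⟨∅, ∅, by simp [hk0]⟩ hK
  -- key dichotomy: each 1-entry is column-light or row-light
  have key : ∀ i j : Fin n, M i j = true →
      (Finset.univ.filter (fun i' => i' < i ∧ M i' j = true)).card < k - 1 ∨
      (Finset.univ.filter (fun j' => j' < j ∧ M i j' = true)).card < k - 1 := by
    intro i j hij
    by_contra h
    push_neg at h
    obtain ⟨h1, h2⟩ := h
    obtain ⟨R', hR'sub, hR'card⟩ := Finset.exists_subset_card_eq h1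
    obtain ⟨C', hC'sub, hC'card⟩ := Finset.exists_subset_card_eq h2
    have hiR : i ∉ R' := fun hiR => by
      have := hR'sub hiR; simp at this
    have hjC : j ∉ C' := fun hjC => by
      have := hC'sub hjC; simp at this
    apply hK
    refine ⟨insert i R', insert j C', ?_, ?_, ?_⟩
    · rw [Finset.card_insert_of_notMem hiR, hR'card]; omega
    · rw [Finset.card_insert_of_notMem hjC, hC'card]; omega
    · intro i' hi' j' hj'
      rcases Finset.mem_insert.mp hi' with rfl | hi'
      · rcases Finset.mem_insert.mp hj' with rfl | hj'
        · exact hij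
        · have := hC'sub hj'; simp only [Finset.mem_filter, Finset.mem_univ, true_and] at this
          exact this.2
      · have hiR' := hR'sub hi'
        simp only [Finset.mem_filter, Finset.mem_univ, true_and] at hiR'
        rcases Finset.mem_insert.mp hj' with rfl | hj'
        · exact hiR'.2
        · have hjC' := hC'sub hj'
          simp only [Finset.mem_filter, Finset.mem_univ, true_and] at hjC'
          have := hpat i' i j' j hiR'.1 hjC'.1
          by_contra hne
          exact this ⟨by simpa using hne, hiR'.2, hjC'.2, hij⟩
  set A := Finset.univ.filter (fun p : Fin n × Fin n => M p.1 p.2 = true ∧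
      (Finset.univ.filter (fun i' => i' < p.1 ∧ M i' p.2 = true)).card < k - 1) with hA
  set B := Finset.univ.filter (fun p : Fin n × Fin n => M p.1 p.2 = true ∧
      (Finset.univ.filter (fun j' => j' < p.2 ∧ M p.1 j' = true)).card < k - 1) with hB
  have hSsub : (Finset.univ.filter (fun p : Fin n × Fin n => M p.1 p.2 = true)) ⊆ A ∪ B := by
    intro p hp
    simp only [Finset.mem_filter, Finset.mem_univ, true_and] at hp
    rcases key p.1 p.2 hp with hc | hc
    · exact Finset.mem_union_left _ (by simp [hA, hp, hc])
    · exact Finset.mem_union_right _ (by simp [hB, hp, hc])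
  have hAcard : A.card ≤ n * (k - 1) := aux_bound M
  have hBcard : B.card ≤ n * (k - 1) := by
    have hinj : Set.InjOn Prod.swap (B : Set (Fin n × Fin n)) :=
      Function.Injective.injOn Prod.swap_injective
    have hmaps : ∀ p ∈ B, p.swap ∈ Finset.univ.filter
        (fun q : Fin n × Fin n => (fun a b => M b a) q.1 q.2 = true ∧
          (Finset.univ.filter (fun i' => i' < q.1 ∧ (fun a b => M b a) i' q.2)).card < k - 1) := by
      intro p hp
      simp only [hB, Finset.mem_filter, Finset.mem_univ, true_and] at hp ⊢
      exact ⟨hp.1, hp.2⟩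
    have := Finset.card_le_card_of_injOn Prod.swap hmaps hinj
    exact this.trans (aux_bound (fun a b => M b a))
  calc (Finset.univ.filter (fun p : Fin n × Fin n => M p.1 p.2 = true)).card
      ≤ (A ∪ B).card := Finset.card_le_card hSsub
    _ ≤ A.card + B.card := Finset.card_union_le _ _
    _ ≤ n * (k - 1) + n * (k - 1) := Nat.add_le_add hAcard hBcard
    _ = 2 * n * (k - 1) := by ring
end
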